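/- Let η : (0,∞) → (0,∞) be a homeomorphism with η(t) < t for every t > 0. Then there exists a strictly decreasing continuous surjection g : (0,∞) → ℝ such that g(η(t)) = g(t) + 1 for every t > 0. In particular g(t) → +∞ as t → 0⁺ and g(t) → −∞ as t → +∞. -/

import Mathlib

open Set Filter Topology

private lemma iter_unbdd (q : ℝ → ℝ) (hc : Continuous q) (hq : ∀ x, q x < x) (b : ℝ) :
    ∃ n : ℕ, q^[n] 0 < b := by
  by_contra h
  push_neg at h
  set d : ℕ → ℝ := fun n => q^[n] 0 with hd
  have hstep : ∀ n, d (n + 1) = q (d n) := fun n => Function.iterate_succ_apply' q n 0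
  have hanti : Antitone d :=
    (strictAnti_nat_of_succ_lt fun n => by rw [hstep]; exact hq (d n)).antitone
  have hbdd : BddBelow (range d) := ⟨b, by rintro _ ⟨n, rfl⟩; exact h n⟩
  have hlim : Tendsto d atTop (𝓝 (⨅ n, d n)) := tendsto_atTop_ciInf hanti hbdd
  have hlim2 : Tendsto (fun n => d (n + 1)) atTop (𝓝 (⨅ n, d n)) :=
    hlim.comp (tendsto_add_atTop_nat 1)
  have hlim3 : Tendsto (fun n => q (d n)) atTop (𝓝 (q (⨅ n, d n))) :=
    (hc.tendsto _).comp hlim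
  have heq : q (⨅ n, d n) = ⨅ n, d n := by
    refine tendsto_nhds_unique ?_ hlim2
    simpa only [← hstep] using hlim3
  exact absurd heq (ne_of_lt (hq _))

private theorem line_conj (p : Equiv.Perm ℝ) (hc : Continuous p) (hc' : Continuous p.symm)
    (hp : ∀ x, p x < x) :
    ∃ G : ℝ → ℝ, StrictAnti G ∧ Continuous G ∧ Function.Surjective G ∧
      ∀ x, G (p x) = G x + 1 := by
  -- p is strictly monotone
  have hmono : StrictMono ⇑p := by
    rcases hc.strictMono_of_inj p.injective with h | h
    · exact h
    · exfalso
      have h0 : p 0 < 0 := hp 0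
      have := h h0  -- p (p 0) > p 0
      exact absurd (hp (p 0)) (not_lt.mpr (h h0).le)
  have hsymm_mono : StrictMono ⇑p.symm := fun a b hab =>
    hmono.lt_iff_lt.mp (by simpa using hab)
  -- algebra of integer powers
  have hpow_add : ∀ (m n : ℤ) (x : ℝ), (p ^ (m + n)) x = (p ^ m) ((p ^ n) x) := by
    intro m n x; rw [zpow_add]; rfl
  have hsucc : ∀ n : ℤ, ⇑(p ^ (n + 1)) = ⇑p ∘ ⇑(p ^ n) := by
    intro n; funext x
    rw [add_comm, hpow_add]
    simp
  have hpred : ∀ n : ℤ, ⇑(p ^ (n - 1)) = ⇑p.symm ∘ ⇑(p ^ n) := by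
    intro n; funext x
    rw [show n - 1 = -1 + n by ring, hpow_add]
    simp [Equiv.Perm.inv_def]
  have hcont : ∀ n : ℤ, Continuous ⇑(p ^ n) := by
    intro n
    induction n using Int.induction_on with
    | zero => simpa using continuous_id
    | succ k ih => rw [hsucc]; exact hc.comp ih
    | pred k ih => rw [show -(k : ℤ) - 1 = (-(k:ℤ)) - 1 from rfl, hpred]; exact hc'.comp ih
  have hmp : ∀ n : ℤ, StrictMono ⇑(p ^ n) := by
    intro n
    induction n using Int.induction_on with
    | zero => simpa using strictMono_id
    | succ k ih => rw [hsucc]; exact hmono.comp ih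
    | pred k ih => rw [show -(k : ℤ) - 1 = (-(k:ℤ)) - 1 from rfl, hpred]; exact hsymm_mono.comp ih
  -- the orbit of 0
  set c : ℤ → ℝ := fun n => (p ^ n) 0 with hcdef
  have hcstep : ∀ n : ℤ, c (n + 1) = p (c n) := fun n => congrFun (hsucc n) 0
  have hcanti : StrictAnti c := strictAnti_int_of_succ_lt fun n => by
    rw [hcstep]; exact hp (c n)
  have czero : c 0 = 0 := by simp [hcdef]
  have hc1 : c 1 < 0 := by
    have h1 : c 1 = p 0 := by simp [hcdef]
    rw [h1]; exact hp 0
  -- unboundedness of the orbit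
  have hiter : ∀ n : ℕ, c (n : ℤ) = (⇑p)^[n] 0 := by
    intro n; induction n with
    | zero => simpa using czero
    | succ k ih =>
        rw [show ((k + 1 : ℕ) : ℤ) = (k : ℤ) + 1 by push_cast; ring, hcstep, ih,
          Function.iterate_succ_apply']
  have hciter : ∀ n : ℕ, c (-(n : ℤ)) = (⇑p.symm)^[n] 0 := by
    intro n; induction n with
    | zero => simpa using czero
    | succ k ih =>
        have h1 := hcstep (-(k : ℤ) - 1)
        rw [show -(k : ℤ) - 1 + 1 = -(k : ℤ) by ring] at h1
        have h2 : c (-(k : ℤ) - 1) = p.symm (c (-(k : ℤ))) := by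
          rw [h1]; simp
        rw [show -((k + 1 : ℕ) : ℤ) = -(k : ℤ) - 1 by push_cast; ring, h2, ih,
          Function.iterate_succ_apply']
  have hlb : ∀ b : ℝ, ∃ n : ℤ, c n < b := by
    intro b
    obtain ⟨n, hn⟩ := iter_unbdd (⇑p) hc hp b
    exact ⟨(n : ℤ), by rw [hiter]; exact hn⟩
  have hub : ∀ b : ℝ, ∃ n : ℤ, b < c n := by
    intro b
    have hq : ∀ x : ℝ, (fun x => -(p.symm (-x))) x < x := by
      intro x
      have h1 : p (p.symm (-x)) < p.symm (-x) := hp _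
      simp only [Equiv.apply_symm_apply] at h1
      simp only []
      linarith
    have hqc : Continuous fun x : ℝ => -(p.symm (-x)) := (hc'.comp continuous_neg).neg
    obtain ⟨n, hn⟩ := iter_unbdd _ hqc hq (-b)
    have hqiter : ∀ m : ℕ, (fun x : ℝ => -(p.symm (-x)))^[m] 0 = -((⇑p.symm)^[m] 0) := by
      intro m; induction m with
      | zero => simp
      | succ k ih =>
          rw [Function.iterate_succ_apply', Function.iterate_succ_apply', ih, neg_neg]
    rw [hqiter] at hn
    refine ⟨-(n : ℤ), ?_⟩
    rw [hciter]; linarith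
  -- greatest n with x ≤ c n
  have hex : ∀ x : ℝ, ∃ n : ℤ, x ≤ c n ∧ ∀ z : ℤ, x ≤ c z → z ≤ n := by
    intro x
    apply Int.exists_greatest_of_bdd
    · obtain ⟨m, hm⟩ := hlb x
      refine ⟨m, fun z hz => ?_⟩
      by_contra hzm
      push_neg at hzm
      exact absurd (hz.trans_lt (hcanti hzm)) (not_lt.mpr hm.le)
    · obtain ⟨n, hn⟩ := hub x
      exact ⟨n, hn.le⟩
  choose N hN1 hN2 using hex
  have hNsucc : ∀ x : ℝ, c (N x + 1) < x := by
    intro x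
    by_contra h
    push_neg at h
    have := hN2 x _ h
    omega
  set G : ℝ → ℝ := fun x => (N x : ℝ) + (p ^ (-(N x))) x / c 1 with hG
  -- evaluation lemmas
  have hq0 : ∀ n : ℤ, (p ^ (-n)) (c n) = 0 := by
    intro n
    have := hpow_add (-n) n 0
    rw [neg_add_cancel] at this
    simpa [hcdef] using this.symm
  have hq1 : ∀ n : ℤ, (p ^ (-n)) (c (n + 1)) = c 1 := by
    intro n
    have := hpow_add (-n) (n + 1) 0
    rw [show -n + (n + 1) = 1 by ring] at this
    exact this.symm
  -- bounds
  have hbnd : ∀ x : ℝ, (N x : ℝ) ≤ G x ∧ G x < N x + 1 := by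
    intro x
    have h1 : (p ^ (-(N x))) x ≤ 0 := by
      have := (hmp (-(N x))).monotone (hN1 x)
      rwa [hq0] at this
    have h2 : c 1 < (p ^ (-(N x))) x := by
      have := hmp (-(N x)) (hNsucc x)
      rwa [hq1] at this
    constructor
    · have h3 : (0 : ℝ) ≤ (p ^ (-(N x))) x / c 1 :=
        (le_div_iff_of_neg hc1).mpr (by simpa using h1)
      simp only [hG]; linarith
    · have h3 : (p ^ (-(N x))) x / c 1 < 1 := (div_lt_one_of_neg hc1).mpr h2
      simp only [hG]; linarith
  have hNanti : ∀ x y : ℝ, x ≤ y → N y ≤ N x := fun x y hxy =>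
    hN2 x _ (hxy.trans (hN1 y))
  -- strict antitonicity
  have hGanti : StrictAnti G := by
    intro x y hxy
    rcases lt_or_eq_of_le (hNanti x y hxy.le) with h | h
    · have b1 := (hbnd y).2
      have b2 := (hbnd x).1
      have : (N y : ℝ) + 1 ≤ (N x : ℝ) := by exact_mod_cast h
      linarith
    · have h4 : (p ^ (-(N x))) x < (p ^ (-(N x))) y := hmp _ hxy
      have h5 : (p ^ (-(N x))) y / c 1 < (p ^ (-(N x))) x / c 1 :=
        (div_lt_div_right_of_neg hc1).mpr h4
      simp only [hG, h]
      linarith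
  -- N at points of the orbit
  have hNc : ∀ m : ℤ, N (c m) = m := by
    intro m
    have h1 : m ≤ N (c m) := hN2 _ m le_rfl
    have h2 : N (c m) ≤ m := by
      by_contra h
      push_neg at h
      exact absurd (hN1 (c m)) (not_le.mpr (hcanti h))
    omega
  have hGc : ∀ m : ℤ, G (c m) = m := by
    intro m
    simp only [hG, hNc, hq0, zero_div, add_zero]
  -- equivariance
  have hNp : ∀ x : ℝ, N (p x) = N x + 1 := by
    intro x
    have h1 : p x ≤ c (N x + 1) := by
      rw [hcstep]; exact hmono.monotone (hN1 x)
    have h2 : ∀ z : ℤ, p x ≤ c z → z ≤ N x + 1 := by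
      intro z hz
      have h3 := hcstep (z - 1)
      rw [show z - 1 + 1 = z by ring] at h3
      rw [h3] at hz
      have h4 : x ≤ c (z - 1) := hmono.le_iff_le.mp hz
      have := hN2 x _ h4
      omega
    have ha := h2 _ (hN1 (p x))
    have hb := hN2 (p x) _ h1
    omega
  have hGeq : ∀ x : ℝ, G (p x) = G x + 1 := by
    intro x
    have e1 : (p ^ (-(N x + 1) + 1)) x = (p ^ (-(N x + 1))) ((p ^ (1 : ℤ)) x) :=
      hpow_add _ 1 x
    rw [show -(N x + 1) + 1 = -(N x) by ring] at e1
    simp only [zpow_one] at e1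
    simp only [hG, hNp x, ← e1]
    push_cast
    ring
  -- surjectivity
  have hsurj : Function.Surjective G := by
    intro y
    set n : ℤ := ⌊y⌋ with hn
    have hcc : c (n + 1) ≤ c n := (hcanti (by omega : n < n + 1)).le
    set h : ℝ → ℝ := fun x => (n : ℝ) + (p ^ (-n)) x / c 1 with hh
    have hch : ContinuousOn h (Icc (c (n + 1)) (c n)) :=
      (continuous_const.add ((hcont (-n)).div_const _)).continuousOn
    have hhn : h (c n) = n := by
      show (n : ℝ) + (p ^ (-n)) (c n) / c 1 = n
      rw [hq0, zero_div, add_zero]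
    have hhn1 : h (c (n + 1)) = n + 1 := by
      show (n : ℝ) + (p ^ (-n)) (c (n + 1)) / c 1 = n + 1
      rw [hq1, div_self hc1.ne]
    have hy : y ∈ Icc (h (c n)) (h (c (n + 1))) := by
      rw [hhn, hhn1]
      exact ⟨Int.floor_le y, (Int.lt_floor_add_one y).le⟩
    obtain ⟨x, hx, hxy⟩ := intermediate_value_Icc' hcc hch hy
    refine ⟨x, ?_⟩
    rcases hx.1.eq_or_lt with he | hlt
    · rw [← he, hGc, ← hxy, ← he, hhn1]
      push_cast; ring
    · have hNx : N x = n := by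
        have h1 : n ≤ N x := hN2 x n hx.2
        have h2 : N x ≤ n := by
          by_contra hcon
          push_neg at hcon
          have h3 : c (N x) ≤ c (n + 1) := hcanti.antitone (by omega)
          have h4 := hN1 x
          linarith
        omega
      rw [← hxy]
      simp only [hG, hNx, hh]
  -- continuity
  have hcontG : Continuous G := by
    have hH : Continuous fun x => -G x := by
      apply Monotone.continuous_of_surjective
      · intro a b hab
        simpa using (hGanti.antitone hab)
      · intro y
        obtain ⟨x, hx⟩ := hsurj (-y)
        exact ⟨x, by simp [hx]⟩
    have h3 : Continuous fun x => - -G x := hH.neg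
    simpa only [neg_neg] using h3
  exact ⟨G, hGanti, hcontG, hsurj, hGeq⟩

theorem stmt16 (η : ↥(Set.Ioi (0 : ℝ)) ≃ₜ ↥(Set.Ioi (0 : ℝ)))
    (hη : ∀ t : ↥(Set.Ioi (0 : ℝ)), (η t : ℝ) < (t : ℝ)) :
    ∃ g : ↥(Set.Ioi (0 : ℝ)) → ℝ,
      StrictAnti g ∧ Continuous g ∧ Function.Surjective g ∧
      (∀ t : ↥(Set.Ioi (0 : ℝ)), g (η t) = g t + 1) ∧
      Filter.Tendsto g (Filter.comap (Subtype.val) (nhdsWithin 0 (Set.Ioi 0)))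
        Filter.atTop ∧
      Filter.Tendsto g (Filter.comap (Subtype.val) Filter.atTop) Filter.atBot := by
  set e : ℝ ≃o Ioi (0 : ℝ) := Real.expOrderIso with he
  set eh : ℝ ≃ₜ ↥(Ioi (0 : ℝ)) := e.toHomeomorph with heh
  set F : ℝ ≃ₜ ℝ := eh.trans (η.trans eh.symm) with hF
  have hFc : Continuous ⇑F.toEquiv := F.continuous
  have hFc' : Continuous ⇑F.toEquiv.symm := F.symm.continuous
  have hFlt : ∀ x : ℝ, F.toEquiv x < x := by
    intro x
    have h1 : η (e x) < e x := by
      rw [← Subtype.coe_lt_coe]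
      exact hη (e x)
    have h2 : e.symm (η (e x)) < e.symm (e x) := e.symm.strictMono h1
    simpa [hF, heh] using h2
  obtain ⟨G, hGanti, hGcont, hGsurj, hGeq⟩ := line_conj F.toEquiv hFc hFc' hFlt
  have hGtop : Tendsto G atBot atTop := by
    rw [tendsto_atTop]
    intro b
    obtain ⟨x₀, hx₀⟩ := hGsurj b
    filter_upwards [eventually_le_atBot x₀] with x hx
    rw [← hx₀]; exact hGanti.antitone hx
  have hGbot : Tendsto G atTop atBot := by
    rw [tendsto_atBot]
    intro b
    obtain ⟨x₀, hx₀⟩ := hGsurj b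
    filter_upwards [eventually_ge_atTop x₀] with x hx
    rw [← hx₀]; exact hGanti.antitone hx
  refine ⟨fun t => G (e.symm t), ?_, ?_, ?_, ?_, ?_, ?_⟩
  · exact hGanti.comp_strictMono e.symm.strictMono
  · exact hGcont.comp eh.symm.continuous
  · intro y
    obtain ⟨x, hx⟩ := hGsurj y
    exact ⟨e x, by simpa using hx⟩
  · intro t
    have h1 := hGeq (e.symm t)
    have h2 : F.toEquiv (e.symm t) = e.symm (η t) := by
      simp [hF, heh]
    rw [h2] at h1
    exact h1
  · rw [comap_coe_Ioi_nhdsGT]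
    have h1 : Tendsto (⇑e.symm) (atBot : Filter ↥(Ioi (0:ℝ))) atBot := by
      rw [← e.symm.map_atBot]
      exact tendsto_map
    exact hGtop.comp h1
  · rw [← atTop_Ioi_eq]
    have h1 : Tendsto (⇑e.symm) (atTop : Filter ↥(Ioi (0:ℝ))) atTop := by
      rw [← e.symm.map_atTop]
      exact tendsto_map
    exact hGbot.comp h1
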